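/- Let ([p*],[u*]) be an optimal process for the pro-rata control problem with η∈[0,1) and γ>0. Then the absolute debt priority rule holds: for every node i∈{1,…,n} and every period t∈{0,…,T−1}, p*_i(t) = min( p̄*_i(t), w*_i(t) + c*_i(t) + Σ_{j≠i} a_{ji} p*_j(t) ), where w*, c*, p̄* are the net worths, total inflows, and residual liabilities generated by the optimal process. -/
import Mathlib


open Finset

noncomputable section

/-- The relative (pro-rata) liability matrix `A` built from the nominal liability matrix. -/
def proRata {n : ℕ} (Pbar : Matrix (Fin n) (Fin n) ℝ) : Matrix (Fin n) (Fin n) ℝ :=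
  fun i j =>
    if 0 < ∑ k, Pbar i k then Pbar i j / ∑ k, Pbar i k
    else if i = j then 1 else 0

/-- Residual liability vectors: `p̄(0) = p̄`, `p̄(t+1) = α (p̄(t) - p(t))`. -/
def resLiabVec {n : ℕ} (α : ℝ) (pbar : Fin n → ℝ)
    (p : ℕ → Fin n → ℝ) : ℕ → Fin n → ℝ
  | 0 => pbar
  | t + 1 => fun i => α * (resLiabVec α pbar p t i - p t i)

/-- Net worths: `w(0) = 0`, `w(t+1) = w(t) + c(t) + Aᵀ p(t) - p(t)`. -/
def netWorthVec {n : ℕ} (A : Matrix (Fin n) (Fin n) ℝ)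
    (c p : ℕ → Fin n → ℝ) : ℕ → Fin n → ℝ
  | 0 => fun _ => 0
  | t + 1 => fun i => netWorthVec A c p t i + c t i + (∑ j, A j i * p t j) - p t i

/-- Cumulative injected cash `B(t) = Σ_{k=0}^{t} 1ᵀ u(k)`. -/
def budget {n : ℕ} (u : ℕ → Fin n → ℝ) (t : ℕ) : ℝ :=
  ∑ k ∈ range (t + 1), ∑ i, u k i

/-- Feasibility of a process `([p],[u])` for the pro-rata control problem. -/
def FeasiblePro {n : ℕ} (T : ℕ) (α : ℝ) (pbar : Fin n → ℝ)
    (A : Matrix (Fin n) (Fin n) ℝ) (e : ℕ → Fin n → ℝ) (F : ℕ → ℝ)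
    (p u : ℕ → Fin n → ℝ) : Prop :=
  ∀ t, t < T →
    (∀ i, 0 ≤ p t i) ∧ (∀ i, 0 ≤ u t i) ∧
    (∀ i, p t i ≤ resLiabVec α pbar p t i) ∧
    (∀ i, 0 ≤ netWorthVec A (fun s i => e s i + u s i) p (t + 1) i) ∧
    budget u t ≤ F t

/-- Cost `J([p],[u])` of the pro-rata control problem. -/
def costPro {n : ℕ} (T : ℕ) (α η γ : ℝ) (pbar : Fin n → ℝ)
    (p u : ℕ → Fin n → ℝ) : ℝ :=
  (1 - η) * ∑ t ∈ range T, ∑ i, (resLiabVec α pbar p t i - p t i)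
    + η * ∑ i, resLiabVec α pbar p T i
    + γ * budget u (T - 1)

/-- Optimality for the pro-rata control problem. -/
def OptimalPro {n : ℕ} (T : ℕ) (α η γ : ℝ) (pbar : Fin n → ℝ)
    (A : Matrix (Fin n) (Fin n) ℝ) (e : ℕ → Fin n → ℝ) (F : ℕ → ℝ)
    (p u : ℕ → Fin n → ℝ) : Prop :=
  FeasiblePro T α pbar A e F p u ∧
  ∀ p' u', FeasiblePro T α pbar A e F p' u' →
    costPro T α η γ pbar p u ≤ costPro T α η γ pbar p' u'

namespace APR

variable {n : ℕ}

lemma exists_fp (lo hi : Fin n → ℝ) (Φ : (Fin n → ℝ) → (Fin n → ℝ))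
    (hm : Monotone Φ) (hlo : ∀ x, lo ≤ Φ x) (hhi : ∀ x, Φ x ≤ hi) :
    ∃ x, Φ x = x := by
  set S : Set (Fin n → ℝ) := {x | x ≤ Φ x} with hS
  have hSlo : lo ∈ S := hlo lo
  have hbdd : ∀ j, BddAbove ((fun x => x j) '' S) := by
    intro j
    refine ⟨hi j, ?_⟩
    rintro v ⟨x, hx, rfl⟩
    exact le_trans (hx j) (hhi x j)
  set b : Fin n → ℝ := fun j => sSup ((fun x => x j) '' S) with hb
  have hxb : ∀ x ∈ S, x ≤ b := by
    intro x hx j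
    exact le_csSup (hbdd j) ⟨x, hx, rfl⟩
  have hbΦ : b ≤ Φ b := by
    intro j
    refine csSup_le ⟨lo j, ⟨lo, hSlo, rfl⟩⟩ ?_
    rintro v ⟨x, hx, rfl⟩
    exact le_trans (hx j) (hm (hxb x hx) j)
  have hΦS : Φ b ∈ S := hm hbΦ
  exact ⟨b, le_antisymm (hxb (Φ b) hΦS) hbΦ⟩

open Classical in
noncomputable def pickFP (Φ : (Fin n → ℝ) → (Fin n → ℝ)) : Fin n → ℝ :=
  if h : ∃ x, Φ x = x then h.choose else fun _ => 0

lemma pickFP_spec {Φ : (Fin n → ℝ) → (Fin n → ℝ)} (h : ∃ x, Φ x = x) :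
    Φ (pickFP Φ) = pickFP Φ := by
  rw [pickFP, dif_pos h]
  exact h.choose_spec

/-- The one-period perturbation map. -/
def stepMap (α : ℝ) (pbar : Fin n → ℝ) (A : Matrix (Fin n) (Fin n) ℝ)
    (c p : ℕ → Fin n → ℝ) (t : ℕ) (i : Fin n) (ε : ℝ)
    (q : ℕ → Fin n → ℝ) (s : ℕ) (π : Fin n → ℝ) : Fin n → ℝ :=
  fun j =>
    if s = t ∧ j = i then
      min (resLiabVec α pbar q s j)
        (max (p s j + ε)
          (netWorthVec A c q s j + c s j + (∑ k, A k j * π k)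
            - netWorthVec A c p (s + 1) j))
    else
      max (max 0 (p s j + resLiabVec α pbar q s j - resLiabVec α pbar p s j))
        (min (netWorthVec A c q s j + c s j + (∑ k, A k j * π k)
            - netWorthVec A c p (s + 1) j)
          (resLiabVec α pbar q s j))

noncomputable def pertHist (α : ℝ) (pbar : Fin n → ℝ) (A : Matrix (Fin n) (Fin n) ℝ)
    (c p : ℕ → Fin n → ℝ) (t : ℕ) (i : Fin n) (ε : ℝ) : ℕ → ℕ → Fin n → ℝ
  | 0 => p
  | m + 1 => fun s j =>
      if s = t + m then
        pickFP (stepMap α pbar A c p t i ε (pertHist α pbar A c p t i ε m) (t + m)) j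
      else pertHist α pbar A c p t i ε m s j

lemma resLiab_congr (α : ℝ) (pbar : Fin n → ℝ) (p q : ℕ → Fin n → ℝ) :
    ∀ s, (∀ k, k < s → p k = q k) →
      resLiabVec α pbar p s = resLiabVec α pbar q s := by
  intro s
  induction s with
  | zero => intro _; rfl
  | succ s ih =>
    intro h
    funext j
    show α * (resLiabVec α pbar p s j - p s j) = α * (resLiabVec α pbar q s j - q s j)
    rw [ih (fun k hk => h k (hk.trans (Nat.lt_succ_self s))), h s (Nat.lt_succ_self s)]

lemma netWorth_congr (A : Matrix (Fin n) (Fin n) ℝ) (c p q : ℕ → Fin n → ℝ) :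
    ∀ s, (∀ k, k < s → p k = q k) →
      netWorthVec A c p s = netWorthVec A c q s := by
  intro s
  induction s with
  | zero => intro _; rfl
  | succ s ih =>
    intro h
    funext j
    show netWorthVec A c p s j + c s j + (∑ k, A k j * p s k) - p s j
        = netWorthVec A c q s j + c s j + (∑ k, A k j * q s k) - q s j
    rw [ih (fun k hk => h k (hk.trans (Nat.lt_succ_self s))), h s (Nat.lt_succ_self s)]

lemma stepMap_congr (α : ℝ) (pbar : Fin n → ℝ) (A : Matrix (Fin n) (Fin n) ℝ)
    (c p : ℕ → Fin n → ℝ) (t : ℕ) (i : Fin n) (ε : ℝ) (q q' : ℕ → Fin n → ℝ) (s : ℕ)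
    (h : ∀ k, k < s → q k = q' k) :
    stepMap α pbar A c p t i ε q s = stepMap α pbar A c p t i ε q' s := by
  funext π j
  unfold stepMap
  rw [resLiab_congr α pbar q q' s h, netWorth_congr A c q q' s h]

lemma pertHist_out (α : ℝ) (pbar : Fin n → ℝ) (A : Matrix (Fin n) (Fin n) ℝ)
    (c p : ℕ → Fin n → ℝ) (t : ℕ) (i : Fin n) (ε : ℝ) :
    ∀ m s, (s < t ∨ t + m ≤ s) → pertHist α pbar A c p t i ε m s = p s := by
  intro m
  induction m with
  | zero => intro s _; rfl
  | succ m ih =>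
    intro s hs
    funext j
    show (if s = t + m then
        pickFP (stepMap α pbar A c p t i ε (pertHist α pbar A c p t i ε m) (t + m)) j
      else pertHist α pbar A c p t i ε m s j) = p s j
    rw [if_neg (by omega), ih s (by omega)]

lemma pertHist_mono (α : ℝ) (pbar : Fin n → ℝ) (A : Matrix (Fin n) (Fin n) ℝ)
    (c p : ℕ → Fin n → ℝ) (t : ℕ) (i : Fin n) (ε : ℝ) :
    ∀ m m', m ≤ m' → ∀ s, s < t + m →
      pertHist α pbar A c p t i ε m' s = pertHist α pbar A c p t i ε m s := by
  intro m m' hm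
  induction m' with
  | zero =>
    intro s _
    have hm0 : m = 0 := Nat.le_zero.mp hm
    rw [hm0]
  | succ m'' ih =>
    intro s hs
    rcases Nat.lt_or_ge m (m'' + 1) with h1 | h1
    · have hm'' : m ≤ m'' := Nat.lt_succ_iff.mp h1
      funext j
      show (if s = t + m'' then
          pickFP (stepMap α pbar A c p t i ε (pertHist α pbar A c p t i ε m'') (t + m'')) j
        else pertHist α pbar A c p t i ε m'' s j) = pertHist α pbar A c p t i ε m s j
      rw [if_neg (by omega), ih hm'' s hs]
    · have : m = m'' + 1 := le_antisymm hm h1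
      rw [this]

lemma step_lemma (α : ℝ) (hα : 1 ≤ α) (pbar : Fin n → ℝ) (A : Matrix (Fin n) (Fin n) ℝ)
    (hA0 : ∀ k j, 0 ≤ A k j) (c p q : ℕ → Fin n → ℝ) (t : ℕ) (i : Fin n) (ε : ℝ)
    (s : ℕ)
    (hq : q s = pickFP (stepMap α pbar A c p t i ε q s))
    (hc0 : ∀ j, 0 ≤ c s j)
    (hp0 : ∀ j, 0 ≤ p s j)
    (hpcap : ∀ j, p s j ≤ resLiabVec α pbar p s j)
    (hw1 : ∀ j, 0 ≤ netWorthVec A c p (s + 1) j)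
    (hεpos : 0 < ε)
    (hεslack : s = t → p t i + ε ≤ resLiabVec α pbar q t i)
    (hεbuf : s = t → ε ≤ netWorthVec A c p (t + 1) i)
    (hmt : s = t → netWorthVec A c q t i = netWorthVec A c p t i)
    (hDt : s = t → ∀ k, resLiabVec α pbar q t k = resLiabVec α pbar p t k)
    (inva : ∀ j, 0 ≤ resLiabVec α pbar q s j)
    (invb : ∀ j, resLiabVec α pbar q s j ≤ resLiabVec α pbar p s j)
    (invc : ∀ j, 0 ≤ netWorthVec A c q s j)
    (invd : ∀ j, (resLiabVec α pbar q s j - resLiabVec α pbar p s j)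
        - (∑ l, A l j * (resLiabVec α pbar q s l - resLiabVec α pbar p s l))
        ≤ netWorthVec A c q s j - netWorthVec A c p s j ∨ resLiabVec α pbar q s j = 0) :
    (∀ j, 0 ≤ q s j) ∧ (∀ j, q s j ≤ resLiabVec α pbar q s j) ∧
    (∀ j, p s j + (resLiabVec α pbar q s j - resLiabVec α pbar p s j) ≤ q s j) ∧
    (s = t → p t i + ε ≤ q t i) ∧
    (∀ j, 0 ≤ resLiabVec α pbar q (s + 1) j) ∧
    (∀ j, resLiabVec α pbar q (s + 1) j ≤ resLiabVec α pbar p (s + 1) j) ∧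
    (∀ j, 0 ≤ netWorthVec A c q (s + 1) j) ∧
    (∀ j, (resLiabVec α pbar q (s + 1) j - resLiabVec α pbar p (s + 1) j)
        - (∑ l, A l j * (resLiabVec α pbar q (s + 1) l - resLiabVec α pbar p (s + 1) l))
        ≤ netWorthVec A c q (s + 1) j - netWorthVec A c p (s + 1) j
      ∨ resLiabVec α pbar q (s + 1) j = 0) := by
  have hα0 : (0:ℝ) ≤ α := le_trans zero_le_one hα
  -- the "lo" function for the Tarski argument
  set lo : Fin n → ℝ := fun j =>
    if s = t ∧ j = i then min (resLiabVec α pbar q s j) (p s j + ε)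
    else max 0 (p s j + resLiabVec α pbar q s j - resLiabVec α pbar p s j) with hlo_def
  have hloP_le_hi : ∀ j, max 0 (p s j + resLiabVec α pbar q s j - resLiabVec α pbar p s j)
      ≤ resLiabVec α pbar q s j := by
    intro j
    apply max_le (inva j)
    have := hpcap j
    linarith
  have hmono : Monotone (stepMap α pbar A c p t i ε q s) := by
    intro x y hxy j
    simp only [stepMap]
    have hsum : (∑ k, A k j * x k) ≤ ∑ k, A k j * y k :=
      Finset.sum_le_sum (fun k _ => mul_le_mul_of_nonneg_left (hxy k) (hA0 k j))
    split_ifs with h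
    · exact min_le_min (le_refl _) (max_le_max (le_refl _) (by linarith))
    · exact max_le_max (le_refl _) (min_le_min (by linarith) (le_refl _))
  have hhiB : ∀ x, stepMap α pbar A c p t i ε q s x ≤ fun j => resLiabVec α pbar q s j := by
    intro x j
    simp only [stepMap]
    split_ifs with h
    · exact min_le_left _ _
    · exact max_le (hloP_le_hi j) (min_le_right _ _)
  have hloB : ∀ x, lo ≤ stepMap α pbar A c p t i ε q s x := by
    intro x j
    simp only [stepMap, hlo_def]
    split_ifs with h
    · exact min_le_min (le_refl _) (le_max_left _ _)
    · exact le_max_left _ _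
  have hex : ∃ x, stepMap α pbar A c p t i ε q s x = x :=
    exists_fp lo (fun j => resLiabVec α pbar q s j) _ hmono hloB hhiB
  have hfp : stepMap α pbar A c p t i ε q s (q s) = q s := by
    rw [hq]; exact pickFP_spec hex
  have hqj : ∀ j, q s j = stepMap α pbar A c p t i ε q s (q s) j :=
    fun j => (congrFun hfp j).symm
  -- abbreviation for "available cash"
  set AV : Fin n → ℝ := fun j =>
    netWorthVec A c q s j + c s j + (∑ k, A k j * q s k) - netWorthVec A c p (s + 1) j
    with hAV
  have hAVj : ∀ j, AV j = netWorthVec A c q s j + c s j + (∑ k, A k j * q s k)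
      - netWorthVec A c p (s + 1) j := fun j => by rw [hAV]
  have hstep : ∀ j, q s j =
      if s = t ∧ j = i then
        min (resLiabVec α pbar q s j) (max (p s j + ε) (AV j))
      else
        max (max 0 (p s j + resLiabVec α pbar q s j - resLiabVec α pbar p s j))
          (min (AV j) (resLiabVec α pbar q s j)) := by
    intro j
    rw [hqj j]
    rfl
  -- successor-step identities
  have hwq1 : ∀ j, netWorthVec A c q (s + 1) j
      = netWorthVec A c q s j + c s j + (∑ k, A k j * q s k) - q s j := fun j => rfl
  have hwp1 : ∀ j, netWorthVec A c p (s + 1) j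
      = netWorthVec A c p s j + c s j + (∑ k, A k j * p s k) - p s j := fun j => rfl
  have hpbq1 : ∀ j, resLiabVec α pbar q (s + 1) j
      = α * (resLiabVec α pbar q s j - q s j) := fun j => rfl
  have hpbp1 : ∀ j, resLiabVec α pbar p (s + 1) j
      = α * (resLiabVec α pbar p s j - p s j) := fun j => rfl
  have hsumsub : ∀ j, (∑ k, A k j * (q s k - p s k))
      = (∑ k, A k j * q s k) - ∑ k, A k j * p s k := by
    intro j
    rw [← Finset.sum_sub_distrib]
    exact Finset.sum_congr rfl (fun k _ => by ring)
  have hAV1 : ∀ j, netWorthVec A c q (s + 1) j - netWorthVec A c p (s + 1) j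
      = AV j - q s j := by
    intro j
    rw [hwq1 j, hAVj j]
    ring
  have hAV2 : ∀ j, AV j = (netWorthVec A c q s j - netWorthVec A c p s j)
      + (∑ k, A k j * (q s k - p s k)) + p s j := by
    intro j
    rw [hAVj j, hwp1 j, hsumsub j]
    ring
  -- basic facts about q s
  have f2 : ∀ j, q s j ≤ resLiabVec α pbar q s j := fun j => by
    rw [hqj j]; exact hhiB (q s) j
  have flo : ∀ j, lo j ≤ q s j := fun j => by
    rw [hqj j]; exact hloB (q s) j
  have f1 : ∀ j, 0 ≤ q s j := by
    intro j
    refine le_trans ?_ (flo j)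
    rw [hlo_def]
    dsimp only
    split_ifs with h
    · exact le_min (inva j) (add_nonneg (hp0 j) (le_of_lt hεpos))
    · exact le_max_left _ _
  have f3 : ∀ j, p s j + (resLiabVec α pbar q s j - resLiabVec α pbar p s j) ≤ q s j := by
    intro j
    refine le_trans ?_ (flo j)
    rw [hlo_def]
    dsimp only
    split_ifs with h
    · refine le_min ?_ ?_
      · have := hpcap j; linarith
      · have := invb j; linarith
    · rw [← add_sub_assoc]
      exact le_max_right _ _
  have f4 : s = t → p t i + ε ≤ q t i := by
    intro hst
    subst hst
    refine le_trans ?_ (flo i)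
    rw [hlo_def]
    dsimp only
    rw [if_pos ⟨rfl, rfl⟩]
    exact le_min (hεslack rfl) (le_refl _)
  -- invariants at s+1
  have inva' : ∀ j, 0 ≤ resLiabVec α pbar q (s + 1) j := by
    intro j
    rw [hpbq1 j]
    have := f2 j
    apply mul_nonneg hα0
    linarith
  have invb' : ∀ j, resLiabVec α pbar q (s + 1) j ≤ resLiabVec α pbar p (s + 1) j := by
    intro j
    rw [hpbq1 j, hpbp1 j]
    apply mul_le_mul_of_nonneg_left _ hα0
    have := f3 j
    linarith
  -- the "no danger" fact: if the lower clamp is positive, available cash covers it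
  have hdanger : ∀ j, ¬(s = t ∧ j = i) →
      0 < p s j + resLiabVec α pbar q s j - resLiabVec α pbar p s j →
      p s j + (resLiabVec α pbar q s j - resLiabVec α pbar p s j) ≤ AV j := by
    intro j hij hpos
    have hncl : resLiabVec α pbar q s j ≠ 0 := by
      intro h0
      rw [h0] at hpos
      have h1 := hpcap j
      have h2 := inva j
      linarith
    rcases invd j with hd | hcl
    · have hsum0 : 0 ≤ ∑ k, A k j * ((q s k - p s k)
          - (resLiabVec α pbar q s k - resLiabVec α pbar p s k)) := by
        apply Finset.sum_nonneg
        intro k _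
        apply mul_nonneg (hA0 k j)
        have := f3 k
        linarith
      have hsplit : (∑ k, A k j * ((q s k - p s k)
          - (resLiabVec α pbar q s k - resLiabVec α pbar p s k)))
          = (∑ k, A k j * (q s k - p s k))
            - ∑ k, A k j * (resLiabVec α pbar q s k - resLiabVec α pbar p s k) := by
        rw [← Finset.sum_sub_distrib]
        exact Finset.sum_congr rfl (fun k _ => by ring)
      rw [hAV2 j]
      rw [hsplit] at hsum0
      linarith
    · exact absurd hcl hncl
  -- wealth nonnegativity at s+1
  have invc' : ∀ j, 0 ≤ netWorthVec A c q (s + 1) j := by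
    intro j
    by_cases hij : s = t ∧ j = i
    · -- forced node
      rcases le_or_gt (q s j) (AV j) with hle | hgt
      · have h1 := hAV1 j
        have h2 := hw1 j
        linarith
      · -- q > AV, so q ≤ p + ε
        obtain ⟨hst, hji⟩ := hij
        subst hst
        subst hji
        have hqle : q s j ≤ p s j + ε := by
          rcases max_cases (p s j + ε) (AV j) with ⟨hmx, _⟩ | ⟨hmx, hmx2⟩
          · have hh := hstep j
            rw [if_pos ⟨rfl, rfl⟩, hmx] at hh
            rw [hh]
            exact min_le_right _ _
          · exfalso
            have hh := hstep j
            rw [if_pos ⟨rfl, rfl⟩, hmx] at hh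
            have : q s j ≤ AV j := by rw [hh]; exact min_le_right _ _
            linarith
        -- AV ≥ p since m = 0 and inflow change ≥ 0
        have hm0 : netWorthVec A c q s j - netWorthVec A c p s j = 0 := by
          rw [hmt rfl]
          ring
        have hI0 : 0 ≤ ∑ k, A k j * (q s k - p s k) := by
          apply Finset.sum_nonneg
          intro k _
          apply mul_nonneg (hA0 k j)
          have h3 := f3 k
          have h4 : resLiabVec α pbar q s k - resLiabVec α pbar p s k = 0 := by
            rw [hDt rfl k]
            ring
          linarith
        have hAVp : p s j ≤ AV j := by
          rw [hAV2 j, hm0]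
          linarith
        have hbuf : ε ≤ netWorthVec A c p (s + 1) j := hεbuf rfl
        have h1 := hAV1 j
        linarith
    · rcases le_or_gt (q s j) (AV j) with hle | hgt
      · have h1 := hAV1 j
        have h2 := hw1 j
        linarith
      · -- q > AV forces q = lower clamp = 0
        have hqlo : q s j = max 0 (p s j + resLiabVec α pbar q s j - resLiabVec α pbar p s j) := by
          have hst := hstep j
          rw [if_neg hij] at hst
          rcases max_cases (max 0 (p s j + resLiabVec α pbar q s j - resLiabVec α pbar p s j))
            (min (AV j) (resLiabVec α pbar q s j)) with ⟨hmx, _⟩ | ⟨hmx, _⟩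
          · rw [hst, hmx]
          · exfalso
            have hq2 : q s j ≤ AV j := by
              rw [hst, hmx]
              exact min_le_left _ _
            linarith
        have hq0 : q s j = 0 := by
          rcases le_or_gt (p s j + resLiabVec α pbar q s j - resLiabVec α pbar p s j) 0 with hle0 | hgt0
          · rw [hqlo]
            exact max_eq_left hle0
          · exfalso
            have hdj := hdanger j hij hgt0
            have hqX : q s j = p s j + resLiabVec α pbar q s j - resLiabVec α pbar p s j := by
              rw [hqlo]
              exact max_eq_right hgt0.le
            linarith
        rw [hwq1 j, hq0]
        have hsum0 : 0 ≤ ∑ k, A k j * q s k :=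
          Finset.sum_nonneg (fun k _ => mul_nonneg (hA0 k j) (f1 k))
        have := invc j
        have := hc0 j
        linarith
  -- invariant (d) at s+1
  have invd' : ∀ j, (resLiabVec α pbar q (s + 1) j - resLiabVec α pbar p (s + 1) j)
      - (∑ l, A l j * (resLiabVec α pbar q (s + 1) l - resLiabVec α pbar p (s + 1) l))
      ≤ netWorthVec A c q (s + 1) j - netWorthVec A c p (s + 1) j
      ∨ resLiabVec α pbar q (s + 1) j = 0 := by
    intro j
    by_cases hcl : resLiabVec α pbar q s j = 0
    · right
      have hq0 : q s j = 0 := le_antisymm (by rw [← hcl]; exact f2 j) (f1 j)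
      rw [hpbq1 j, hcl, hq0]
      ring
    · rcases le_or_gt (AV j) (q s j) with hge | hlt
      · left
        rcases invd j with hd | hcl'
        swap
        · exact absurd hcl' hcl
        have hDd : ∀ l, resLiabVec α pbar q (s + 1) l - resLiabVec α pbar p (s + 1) l
            = α * ((resLiabVec α pbar q s l - resLiabVec α pbar p s l) - (q s l - p s l)) := by
          intro l
          rw [hpbq1 l, hpbp1 l]
          ring
        have hsumD : (∑ l, A l j * (resLiabVec α pbar q (s + 1) l - resLiabVec α pbar p (s + 1) l))
            = α * ∑ l, A l j * ((resLiabVec α pbar q s l - resLiabVec α pbar p s l) - (q s l - p s l)) := by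
          rw [Finset.mul_sum]
          exact Finset.sum_congr rfl (fun l _ => by rw [hDd l]; ring)
        -- B := bracket; show α * B ≤ AV - q and we are done
        set B : ℝ := ((resLiabVec α pbar q s j - resLiabVec α pbar p s j) - (q s j - p s j))
          - ∑ l, A l j * ((resLiabVec α pbar q s l - resLiabVec α pbar p s l) - (q s l - p s l))
          with hB
        have hgoal_eq : (resLiabVec α pbar q (s + 1) j - resLiabVec α pbar p (s + 1) j)
            - (∑ l, A l j * (resLiabVec α pbar q (s + 1) l - resLiabVec α pbar p (s + 1) l))
            = α * B := by
          rw [hDd j, hsumD, hB]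
          ring
        have hBsplit : (∑ l, A l j * ((resLiabVec α pbar q s l - resLiabVec α pbar p s l) - (q s l - p s l)))
            = (∑ l, A l j * (resLiabVec α pbar q s l - resLiabVec α pbar p s l))
              - ∑ l, A l j * (q s l - p s l) := by
          rw [← Finset.sum_sub_distrib]
          exact Finset.sum_congr rfl (fun l _ => by ring)
        have hBle : B ≤ AV j - q s j := by
          rw [hB, hBsplit, hAV2 j]
          linarith
        have hB0 : B ≤ 0 := le_trans hBle (by linarith)
        have hαB : α * B ≤ B := by nlinarith
        rw [hgoal_eq, hAV1 j]
        linarith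
      · -- q < AV forces q = residual cap, hence cleared at s+1
        right
        have hqcap : q s j = resLiabVec α pbar q s j := by
          by_cases hij : s = t ∧ j = i
          · have hst := hstep j
            rw [if_pos hij] at hst
            rcases min_cases (resLiabVec α pbar q s j) (max (p s j + ε) (AV j)) with ⟨hmn, _⟩ | ⟨hmn, hmn2⟩
            · rw [hst, hmn]
            · exfalso
              have : AV j ≤ q s j := by
                rw [hst, hmn]
                exact le_max_right _ _
              linarith
          · have hst := hstep j
            rw [if_neg hij] at hst
            rcases min_cases (AV j) (resLiabVec α pbar q s j) with ⟨hmn, _⟩ | ⟨hmn, _⟩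
            · exfalso
              have : AV j ≤ q s j := by
                rw [hst, hmn]
                exact le_max_right _ _
              linarith
            · rw [hst, hmn]
              exact max_eq_right (hloP_le_hi j)
        rw [hpbq1 j, hqcap]
        ring
  exact ⟨f1, f2, f3, f4, inva', invb', invc', invd'⟩

end APR

theorem stmt1_absolute_priority_prorata (n T : ℕ) (hn : 1 ≤ n) (hT : 1 ≤ T)
    (α : ℝ) (hα : 1 ≤ α)
    (Pbar : Matrix (Fin n) (Fin n) ℝ)
    (hPbar : ∀ i j, 0 ≤ Pbar i j) (hPdiag : ∀ i, Pbar i i = 0)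
    (pbar : Fin n → ℝ) (hpbar : ∀ i, pbar i = ∑ j, Pbar i j)
    (A : Matrix (Fin n) (Fin n) ℝ) (hA : A = proRata Pbar)
    (e : ℕ → Fin n → ℝ) (he : ∀ t, t < T → ∀ i, 0 ≤ e t i)
    (F : ℕ → ℝ) (hF : ∀ t, 0 ≤ F t) (hFmono : ∀ s t, s ≤ t → F s ≤ F t)
    (η γ : ℝ) (hη0 : 0 ≤ η) (hη1 : η < 1) (hγ : 0 < γ)
    (pstar ustar : ℕ → Fin n → ℝ)
    (hopt : OptimalPro T α η γ pbar A e F pstar ustar) :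
    ∀ i : Fin n, ∀ t, t < T →
      pstar t i =
        min (resLiabVec α pbar pstar t i)
          (netWorthVec A (fun s i => e s i + ustar s i) pstar t i + (e t i + ustar t i)
            + ∑ j ∈ univ.erase i, A j i * pstar t j) := by
  intro i t ht
  have hfeas := hopt.1
  have hα0 : (0:ℝ) ≤ α := le_trans zero_le_one hα
  have hA0 : ∀ k j, 0 ≤ A k j := by
    intro k j
    rw [hA]
    show (0:ℝ) ≤ if 0 < ∑ l, Pbar k l then Pbar k j / ∑ l, Pbar k l else if k = j then 1 else 0
    split_ifs with h1 h2
    · exact div_nonneg (hPbar k j) (le_of_lt h1)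
    · exact zero_le_one
    · exact le_refl 0
  have hpbar0 : ∀ j, 0 ≤ pbar j := by
    intro j
    rw [hpbar j]
    exact Finset.sum_nonneg (fun k _ => hPbar j k)
  have hu0 : ∀ s, s < T → ∀ j, 0 ≤ ustar s j := fun s hs => (hfeas s hs).2.1
  have hp0 : ∀ s, s < T → ∀ j, 0 ≤ pstar s j := fun s hs => (hfeas s hs).1
  have hpcap : ∀ s, s < T → ∀ j, pstar s j ≤ resLiabVec α pbar pstar s j :=
    fun s hs => (hfeas s hs).2.2.1
  have hpbnn : ∀ s, s ≤ T → ∀ j, 0 ≤ resLiabVec α pbar pstar s j := by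
    intro s
    induction s with
    | zero => intro _ j; exact hpbar0 j
    | succ s ih =>
      intro hs j
      have hsT : s < T := by omega
      have h1 := hpcap s hsT j
      have h2 := ih (by omega) j
      show 0 ≤ α * (resLiabVec α pbar pstar s j - pstar s j)
      apply mul_nonneg hα0
      linarith
  have hwnn : ∀ s, s ≤ T → ∀ j,
      0 ≤ netWorthVec A (fun s i => e s i + ustar s i) pstar s j := by
    intro s hs j
    cases s with
    | zero => exact le_refl 0
    | succ s => exact (hfeas s (by omega)).2.2.2.1 j
  rcases eq_or_lt_of_le (hpbar0 i) with hz | hpos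
  · -- pbar i = 0 : node i has no debt at all
    have hz' : pbar i = 0 := hz.symm
    have hres0 : ∀ s, s ≤ T → resLiabVec α pbar pstar s i = 0 := by
      intro s
      induction s with
      | zero => intro _; exact hz'
      | succ s ih =>
        intro hs
        have hsT : s < T := by omega
        have h1 := ih (by omega)
        have h2 := hpcap s hsT i
        have h3 := hp0 s hsT i
        have hp' : pstar s i = 0 := le_antisymm (by rw [← h1]; exact h2) h3
        show α * (resLiabVec α pbar pstar s i - pstar s i) = 0
        rw [h1, hp']
        ring
    have hpt0 : pstar t i = 0 := by
      have h2 := hpcap t ht i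
      have h3 := hp0 t ht i
      rw [hres0 t (le_of_lt ht)] at h2
      linarith
    rw [hpt0, hres0 t (le_of_lt ht)]
    have hcash : 0 ≤ netWorthVec A (fun s i => e s i + ustar s i) pstar t i
        + (e t i + ustar t i) + ∑ j ∈ univ.erase i, A j i * pstar t j := by
      have h1 := hwnn t (le_of_lt ht) i
      have h2 := he t ht i
      have h3 := hu0 t ht i
      have h4 : 0 ≤ ∑ j ∈ univ.erase i, A j i * pstar t j :=
        Finset.sum_nonneg (fun k _ => mul_nonneg (hA0 k i) (hp0 t ht k))
      linarith
    exact (min_eq_left hcash).symm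
  · -- 0 < pbar i
    have hAii : A i i = 0 := by
      have hcond : 0 < ∑ k, Pbar i k := by rw [← hpbar i]; exact hpos
      rw [hA]
      show (if 0 < ∑ l, Pbar i l then Pbar i i / ∑ l, Pbar i l else if (i:Fin n) = i then 1 else 0) = 0
      rw [if_pos hcond, hPdiag i, zero_div]
    have hsplit : (∑ k, A k i * pstar t k)
        = (∑ k ∈ univ.erase i, A k i * pstar t k) + A i i * pstar t i :=
      (Finset.sum_erase_add univ _ (Finset.mem_univ i)).symm
    have hwt1 : netWorthVec A (fun s i => e s i + ustar s i) pstar (t + 1) i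
        = netWorthVec A (fun s i => e s i + ustar s i) pstar t i + (e t i + ustar t i)
          + (∑ j ∈ univ.erase i, A j i * pstar t j) - pstar t i := by
      show netWorthVec A (fun s i => e s i + ustar s i) pstar t i + (e t i + ustar t i)
          + (∑ k, A k i * pstar t k) - pstar t i = _
      rw [hsplit, hAii]
      ring
    have hle : pstar t i ≤ min (resLiabVec α pbar pstar t i)
        (netWorthVec A (fun s i => e s i + ustar s i) pstar t i + (e t i + ustar t i)
          + ∑ j ∈ univ.erase i, A j i * pstar t j) := by
      refine le_min (hpcap t ht i) ?_
      have h1 := (hfeas t ht).2.2.2.1 i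
      rw [hwt1] at h1
      linarith
    refine le_antisymm hle ?_
    by_contra hcon
    push_neg at hcon
    rw [lt_min_iff] at hcon
    obtain ⟨hlt1, hlt2⟩ := hcon
    have hbufpos : 0 < netWorthVec A (fun s i => e s i + ustar s i) pstar (t + 1) i := by
      rw [hwt1]; linarith
    set ε := min (resLiabVec α pbar pstar t i - pstar t i)
        (netWorthVec A (fun s i => e s i + ustar s i) pstar (t + 1) i) with hεdef
    have hε : 0 < ε := lt_min (by linarith) hbufpos
    have hεs : pstar t i + ε ≤ resLiabVec α pbar pstar t i := by
      have := min_le_left (resLiabVec α pbar pstar t i - pstar t i)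
        (netWorthVec A (fun s i => e s i + ustar s i) pstar (t + 1) i)
      rw [← hεdef] at this
      linarith
    have hεb : ε ≤ netWorthVec A (fun s i => e s i + ustar s i) pstar (t + 1) i := by
      have := min_le_right (resLiabVec α pbar pstar t i - pstar t i)
        (netWorthVec A (fun s i => e s i + ustar s i) pstar (t + 1) i)
      rw [← hεdef] at this
      exact this
    -- the perturbed payment process
    set q := APR.pertHist α pbar A (fun s i => e s i + ustar s i) pstar t i ε (T - t) with hqdef
    have hq_low : ∀ s, s < t → q s = pstar s := by
      intro s hs
      rw [hqdef]
      exact APR.pertHist_out α pbar A _ pstar t i ε (T - t) s (Or.inl hs)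
    have hres_eq : ∀ s, s ≤ t → resLiabVec α pbar q s = resLiabVec α pbar pstar s := by
      intro s hs
      exact APR.resLiab_congr α pbar q pstar s (fun k hk => hq_low k (by omega))
    have hw_eq : ∀ s, s ≤ t →
        netWorthVec A (fun s i => e s i + ustar s i) q s
          = netWorthVec A (fun s i => e s i + ustar s i) pstar s := by
      intro s hs
      exact APR.netWorth_congr A _ q pstar s (fun k hk => hq_low k (by omega))
    have hfix : ∀ s, t ≤ s → s < T →
        q s = APR.pickFP (APR.stepMap α pbar A (fun s i => e s i + ustar s i) pstar t i ε q s) := by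
      intro s hts hsT
      have h3 : s = t + (s - t) := by omega
      have hcg : ∀ k, k < s → APR.pertHist α pbar A (fun s i => e s i + ustar s i) pstar t i ε (s - t) k = q k := by
        intro k hk
        rw [hqdef]
        exact (APR.pertHist_mono α pbar A _ pstar t i ε (s - t) (T - t) (by omega) k (by omega)).symm
      have h4 : q s = APR.pertHist α pbar A (fun s i => e s i + ustar s i) pstar t i ε (s - t + 1) s := by
        rw [hqdef]
        exact APR.pertHist_mono α pbar A _ pstar t i ε (s - t + 1) (T - t) (by omega) s (by omega)
      rw [h4]
      have h5 : ∀ j, APR.pertHist α pbar A (fun s i => e s i + ustar s i) pstar t i ε (s - t + 1) s j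
          = APR.pickFP (APR.stepMap α pbar A (fun s i => e s i + ustar s i) pstar t i ε
              (APR.pertHist α pbar A (fun s i => e s i + ustar s i) pstar t i ε (s - t)) (t + (s - t))) j := by
        intro j
        show (if s = t + (s - t) then _ else _) = _
        rw [if_pos h3]
      funext j
      rw [h5 j, ← h3,
        APR.stepMap_congr α pbar A (fun s i => e s i + ustar s i) pstar t i ε _ q s hcg]
    -- one application of the step lemma
    have dostep : ∀ s, t ≤ s → s < T →
        (∀ j, 0 ≤ resLiabVec α pbar q s j) →
        (∀ j, resLiabVec α pbar q s j ≤ resLiabVec α pbar pstar s j) →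
        (∀ j, 0 ≤ netWorthVec A (fun s i => e s i + ustar s i) q s j) →
        (∀ j, (resLiabVec α pbar q s j - resLiabVec α pbar pstar s j)
            - (∑ l, A l j * (resLiabVec α pbar q s l - resLiabVec α pbar pstar s l))
            ≤ netWorthVec A (fun s i => e s i + ustar s i) q s j
              - netWorthVec A (fun s i => e s i + ustar s i) pstar s j
          ∨ resLiabVec α pbar q s j = 0) →
        ((∀ j, 0 ≤ q s j) ∧ (∀ j, q s j ≤ resLiabVec α pbar q s j) ∧
        (∀ j, pstar s j + (resLiabVec α pbar q s j - resLiabVec α pbar pstar s j) ≤ q s j) ∧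
        (s = t → pstar t i + ε ≤ q t i) ∧
        (∀ j, 0 ≤ resLiabVec α pbar q (s + 1) j) ∧
        (∀ j, resLiabVec α pbar q (s + 1) j ≤ resLiabVec α pbar pstar (s + 1) j) ∧
        (∀ j, 0 ≤ netWorthVec A (fun s i => e s i + ustar s i) q (s + 1) j) ∧
        (∀ j, (resLiabVec α pbar q (s + 1) j - resLiabVec α pbar pstar (s + 1) j)
            - (∑ l, A l j * (resLiabVec α pbar q (s + 1) l - resLiabVec α pbar pstar (s + 1) l))
            ≤ netWorthVec A (fun s i => e s i + ustar s i) q (s + 1) j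
              - netWorthVec A (fun s i => e s i + ustar s i) pstar (s + 1) j
          ∨ resLiabVec α pbar q (s + 1) j = 0)) := by
      intro s hts hsT inva invb invc invd
      exact APR.step_lemma α hα pbar A hA0 (fun s i => e s i + ustar s i) pstar q t i ε s
        (hfix s hts hsT)
        (fun j => add_nonneg (he s hsT j) (hu0 s hsT j))
        (hp0 s hsT) (hpcap s hsT) ((hfeas s hsT).2.2.2.1)
        hε
        (fun _ => by rw [hres_eq t le_rfl]; exact hεs)
        (fun _ => hεb)
        (fun _ => by rw [hw_eq t le_rfl])
        (fun _ k => by rw [hres_eq t le_rfl])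
        inva invb invc invd
    -- the invariants, by induction over time
    have master : ∀ m, t + m ≤ T →
        (∀ j, 0 ≤ resLiabVec α pbar q (t + m) j) ∧
        (∀ j, resLiabVec α pbar q (t + m) j ≤ resLiabVec α pbar pstar (t + m) j) ∧
        (∀ j, 0 ≤ netWorthVec A (fun s i => e s i + ustar s i) q (t + m) j) ∧
        (∀ j, (resLiabVec α pbar q (t + m) j - resLiabVec α pbar pstar (t + m) j)
            - (∑ l, A l j * (resLiabVec α pbar q (t + m) l - resLiabVec α pbar pstar (t + m) l))
            ≤ netWorthVec A (fun s i => e s i + ustar s i) q (t + m) j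
              - netWorthVec A (fun s i => e s i + ustar s i) pstar (t + m) j
          ∨ resLiabVec α pbar q (t + m) j = 0) := by
      intro m
      induction m with
      | zero =>
        intro _
        rw [Nat.add_zero]
        refine ⟨?_, ?_, ?_, ?_⟩
        · intro j
          rw [hres_eq t le_rfl]
          exact hpbnn t (le_of_lt ht) j
        · intro j
          rw [hres_eq t le_rfl]
        · intro j
          rw [hw_eq t le_rfl]
          exact hwnn t (le_of_lt ht) j
        · intro j
          left
          rw [hres_eq t le_rfl, hw_eq t le_rfl]
          simp
      | succ m ih =>
        intro hm
        have h1 : t ≤ t + m := by omega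
        have h2 : t + m < T := by omega
        obtain ⟨ia, ib, ic, id⟩ := ih (by omega)
        have R := dostep (t + m) h1 h2 ia ib ic id
        have hadd : t + (m + 1) = (t + m) + 1 := by omega
        rw [hadd]
        exact ⟨R.2.2.2.2.1, R.2.2.2.2.2.1, R.2.2.2.2.2.2.1, R.2.2.2.2.2.2.2⟩
    have stepfacts : ∀ s, t ≤ s → s < T →
        (∀ j, 0 ≤ q s j) ∧ (∀ j, q s j ≤ resLiabVec α pbar q s j) ∧
        (∀ j, pstar s j + (resLiabVec α pbar q s j - resLiabVec α pbar pstar s j) ≤ q s j) ∧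
        (s = t → pstar t i + ε ≤ q t i) := by
      intro s hts hsT
      have hm := master (s - t) (by omega)
      have hst : t + (s - t) = s := by omega
      rw [hst] at hm
      obtain ⟨ia, ib, ic, id⟩ := hm
      have R := dostep s hts hsT ia ib ic id
      exact ⟨R.1, R.2.1, R.2.2.1, R.2.2.2.1⟩
    -- feasibility of the perturbed process
    have hfeas' : FeasiblePro T α pbar A e F q ustar := by
      intro s hsT
      have hb := hfeas s hsT
      refine ⟨?_, hb.2.1, ?_, ?_, hb.2.2.2.2⟩
      · intro j
        rcases lt_or_ge s t with hlt | hge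
        · rw [hq_low s hlt]; exact hp0 s hsT j
        · exact (stepfacts s hge hsT).1 j
      · intro j
        rcases lt_or_ge s t with hlt | hge
        · rw [hq_low s hlt, hres_eq s (by omega)]; exact hpcap s hsT j
        · exact (stepfacts s hge hsT).2.1 j
      · intro j
        rcases lt_or_ge (s + 1) (t + 1) with hlt | hge
        · have hst : s + 1 ≤ t := by omega
          rw [hw_eq (s + 1) hst]
          exact hwnn (s + 1) (by omega) j
        · have hm := master (s + 1 - t) (by omega)
          have hst : t + (s + 1 - t) = s + 1 := by omega
          rw [hst] at hm
          exact hm.2.2.1 j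
    -- the cost strictly decreases : contradiction with optimality
    have hterm_low : ∀ s, s < t → ∀ j,
        (resLiabVec α pbar q s j - q s j) - (resLiabVec α pbar pstar s j - pstar s j) = 0 := by
      intro s hs j
      rw [hq_low s hs, hres_eq s (by omega)]
      ring
    have hterm_mid : ∀ s, t ≤ s → s < T → ∀ j,
        (resLiabVec α pbar q s j - q s j) - (resLiabVec α pbar pstar s j - pstar s j) ≤ 0 := by
      intro s h1 h2 j
      have := (stepfacts s h1 h2).2.2.1 j
      linarith
    have hterm_ti :
        (resLiabVec α pbar q t i - q t i) - (resLiabVec α pbar pstar t i - pstar t i) ≤ -ε := by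
      have h4 := (stepfacts t le_rfl ht).2.2.2 rfl
      have h5 := congrFun (hres_eq t le_rfl) i
      linarith
    have key1 : (∑ s ∈ range T, ∑ j, (resLiabVec α pbar q s j - q s j))
        ≤ (∑ s ∈ range T, ∑ j, (resLiabVec α pbar pstar s j - pstar s j)) + (-ε) := by
      have hdist : (∑ s ∈ range T, ∑ j, (resLiabVec α pbar q s j - q s j))
          - (∑ s ∈ range T, ∑ j, (resLiabVec α pbar pstar s j - pstar s j))
          = ∑ s ∈ range T, ∑ j, ((resLiabVec α pbar q s j - q s j)
              - (resLiabVec α pbar pstar s j - pstar s j)) := by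
        rw [← Finset.sum_sub_distrib]
        refine Finset.sum_congr rfl (fun s _ => ?_)
        rw [← Finset.sum_sub_distrib]
      have hmemt : t ∈ range T := mem_range.mpr ht
      have hsplitsum : ∑ s ∈ range T, ∑ j, ((resLiabVec α pbar q s j - q s j)
            - (resLiabVec α pbar pstar s j - pstar s j))
          = (∑ j, ((resLiabVec α pbar q t j - q t j)
              - (resLiabVec α pbar pstar t j - pstar t j)))
            + ∑ s ∈ (range T).erase t, ∑ j, ((resLiabVec α pbar q s j - q s j)
              - (resLiabVec α pbar pstar s j - pstar s j)) :=
        (Finset.add_sum_erase (range T) _ hmemt).symm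
      have hft : (∑ j, ((resLiabVec α pbar q t j - q t j)
            - (resLiabVec α pbar pstar t j - pstar t j))) ≤ -ε := by
        have hsplitj : (∑ j, ((resLiabVec α pbar q t j - q t j)
              - (resLiabVec α pbar pstar t j - pstar t j)))
            = ((resLiabVec α pbar q t i - q t i) - (resLiabVec α pbar pstar t i - pstar t i))
              + ∑ j ∈ univ.erase i, ((resLiabVec α pbar q t j - q t j)
                - (resLiabVec α pbar pstar t j - pstar t j)) :=
          (Finset.add_sum_erase univ _ (Finset.mem_univ i)).symm
        have h6 : ∑ j ∈ univ.erase i, ((resLiabVec α pbar q t j - q t j)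
            - (resLiabVec α pbar pstar t j - pstar t j)) ≤ 0 :=
          Finset.sum_nonpos (fun j _ => hterm_mid t le_rfl ht j)
        rw [hsplitj]
        linarith [hterm_ti]
      have hrest : ∑ s ∈ (range T).erase t, ∑ j, ((resLiabVec α pbar q s j - q s j)
          - (resLiabVec α pbar pstar s j - pstar s j)) ≤ 0 := by
        apply Finset.sum_nonpos
        intro s hs
        have hsT : s < T := mem_range.mp (Finset.mem_of_mem_erase hs)
        rcases lt_or_ge s t with h | h
        · exact Finset.sum_nonpos (fun j _ => le_of_eq (hterm_low s h j))
        · exact Finset.sum_nonpos (fun j _ => hterm_mid s h hsT j)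
      linarith [hdist, hsplitsum, hft, hrest]
    have key2 : (∑ j, resLiabVec α pbar q T j) ≤ ∑ j, resLiabVec α pbar pstar T j := by
      apply Finset.sum_le_sum
      intro j _
      have hm := master (T - t) (by omega)
      have hst : t + (T - t) = T := by omega
      rw [hst] at hm
      exact hm.2.1 j
    have hcost : costPro T α η γ pbar q ustar < costPro T α η γ pbar pstar ustar := by
      have k3 : 0 < (1 - η) * ε := mul_pos (by linarith) hε
      have hint1 := mul_le_mul_of_nonneg_left key1 (show (0:ℝ) ≤ 1 - η by linarith)
      have hint2 := mul_le_mul_of_nonneg_left key2 hη0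
      unfold costPro
      nlinarith [hint1, hint2, k3]
    have hopt2 := hopt.2 q ustar hfeas'
    linarith
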